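/- Let α, β, γ, δ be elements of ℤ^m each of squared length 2 (type 2), pairwise satisfying (β,γ) ≤ 0, (β,δ) ≤ 0, (γ,δ) ≤ 0, and suppose (β,α) = (γ,α) = (δ,α) = −1. Then some pair among {β, γ, δ} is conjugate, i.e., two of them are of the form b·e_j* + c·e_k* and b·e_j* − c·e_k* for some j ≠ k and signs b, c ∈ {±1}, and are linearly independent. -/
import Mathlib


open Finset

/-- The standard scalar product on `ℤ^m`. -/
def dotZ {m : ℕ} (a b : Fin m → ℤ) : ℤ := ∑ i, a i * b i

/-- Two type 2 elements of `ℤ^m` are conjugate if they are linearly independent and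
of the form `b·e_j + c·e_k` and `b·e_j − c·e_k` for a common pair `j ≠ k` and
signs `b, c ∈ {±1}`. -/
def Conjugate {m : ℕ} (x y : Fin m → ℤ) : Prop :=
  LinearIndependent ℤ ![x, y] ∧
  ∃ j k : Fin m, j ≠ k ∧ ∃ b c : ℤ, (b = 1 ∨ b = -1) ∧ (c = 1 ∨ c = -1) ∧
    x = b • Pi.single j (1:ℤ) + c • Pi.single k (1:ℤ) ∧
    y = b • Pi.single j (1:ℤ) - c • Pi.single k (1:ℤ)

lemma dotZ_add_left {m} (x y z : Fin m → ℤ) : dotZ (x+y) z = dotZ x z + dotZ y z := by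
  simp [dotZ, add_mul, Finset.sum_add_distrib]
lemma dotZ_add_right {m} (x y z : Fin m → ℤ) : dotZ x (y+z) = dotZ x y + dotZ x z := by
  simp [dotZ, mul_add, Finset.sum_add_distrib]
lemma dotZ_smul_left {m} (r : ℤ) (x z : Fin m → ℤ) : dotZ (r • x) z = r * dotZ x z := by
  simp [dotZ, Finset.mul_sum, mul_assoc]
lemma dotZ_smul_right {m} (r : ℤ) (x z : Fin m → ℤ) : dotZ x (r • z) = r * dotZ x z := by
  simp [dotZ, Finset.mul_sum]; congr 1; funext i; ring
lemma dotZ_single_single {m} (j k : Fin m) :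
    dotZ (Pi.single j (1:ℤ)) (Pi.single k 1) = if j = k then 1 else 0 := by
  simp [dotZ, Pi.single_apply, ite_and, eq_comm]

lemma dotZ_expand {m} (b c a a' : ℤ) (j k p q : Fin m) :
    dotZ (b • Pi.single j (1:ℤ) + c • Pi.single k 1) (a • Pi.single p 1 + a' • Pi.single q 1)
    = b*a*(if j=p then 1 else 0) + b*a'*(if j=q then 1 else 0)
      + c*a*(if k=p then 1 else 0) + c*a'*(if k=q then 1 else 0) := by
  simp only [dotZ_add_left, dotZ_add_right, dotZ_smul_left, dotZ_smul_right, dotZ_single_single]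
  ring

lemma overlap {m} {a a' b c : ℤ} {p q j k : Fin m} (hpq : p ≠ q) (hjk : j ≠ k)
    (ha : a = 1 ∨ a = -1) (ha' : a' = 1 ∨ a' = -1)
    (hb : b = 1 ∨ b = -1) (hc : c = 1 ∨ c = -1)
    (h : dotZ (b • Pi.single j (1:ℤ) + c • Pi.single k 1)
        (a • Pi.single p 1 + a' • Pi.single q 1) = -1) :
    ∃ (u v : Fin m) (t au : ℤ), ((u = p ∧ au = a) ∨ (u = q ∧ au = a')) ∧
      v ≠ p ∧ v ≠ q ∧ (t = 1 ∨ t = -1) ∧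
      b • Pi.single j (1:ℤ) + c • Pi.single k 1 = (-au) • (Pi.single u (1:ℤ) : Fin m → ℤ) + t • (Pi.single v (1:ℤ) : Fin m → ℤ) := by
  rw [dotZ_expand] at h
  by_cases hjp : j = p
  · have hjq : ¬ j = q := by rw [hjp]; exact hpq
    by_cases hkq : k = q
    · -- b*a + c*a' = -1 impossible
      have hkp : ¬ k = p := by rw [hkq]; exact fun h => hpq h.symm
      simp [hjp, hjq, hkp, hkq] at h
      rcases ha with rfl|rfl <;> rcases ha' with rfl|rfl <;>
        rcases hb with rfl|rfl <;> rcases hc with rfl|rfl <;> omega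
    · have hkp : ¬ k = p := by rw [← hjp]; exact fun h => hjk h.symm
      simp [hjp, hjq, hkp, hkq] at h
      -- h : b * a = -1, so b = -a
      have hba : b = -a := by
        rcases ha with rfl|rfl <;> rcases hb with rfl|rfl <;> omega
      exact ⟨p, k, c, a, Or.inl ⟨rfl, rfl⟩, hkp, hkq, hc, by rw [← hjp, ← hba]⟩
  · by_cases hjq : j = q
    · by_cases hkp : k = p
      · have hkq : ¬ k = q := by rw [hkp]; exact hpq
        simp [hjp, hjq, hkp, hkq] at h
        rcases ha with rfl|rfl <;> rcases ha' with rfl|rfl <;>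
          rcases hb with rfl|rfl <;> rcases hc with rfl|rfl <;> omega
      · have hkq : ¬ k = q := by rw [← hjq]; exact fun h => hjk h.symm
        simp [hjp, hjq, hkp, hkq] at h
        have hba : b = -a' := by
          rcases ha' with rfl|rfl <;> rcases hb with rfl|rfl <;> omega
        exact ⟨q, k, c, a', Or.inr ⟨rfl, rfl⟩, hkp, hkq, hc, by rw [← hjq, ← hba]⟩
    · by_cases hkp : k = p
      · have hkq : ¬ k = q := by rw [hkp]; exact hpq
        simp [hjp, hjq, hkp, hkq] at h
        have hca : c = -a := by
          rcases ha with rfl|rfl <;> rcases hc with rfl|rfl <;> omega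
        exact ⟨p, j, b, a, Or.inl ⟨rfl, rfl⟩, hjp, hjq, hb,
          by rw [← hkp, ← hca, add_comm]⟩
      · by_cases hkq : k = q
        · simp [hjp, hjq, hkp, hkq] at h
          have hca : c = -a' := by
            rcases ha' with rfl|rfl <;> rcases hc with rfl|rfl <;> omega
          exact ⟨q, j, b, a', Or.inr ⟨rfl, rfl⟩, hjp, hjq, hb,
            by rw [← hkq, ← hca, add_comm]⟩
        · simp [hjp, hjq, hkp, hkq] at h
lemma pair_conj {m} {u v v' : Fin m} {au t t' : ℤ}
    (hau : au = 1 ∨ au = -1) (ht : t = 1 ∨ t = -1) (ht' : t' = 1 ∨ t' = -1)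
    (hvu : v ≠ u) (hv'u : v' ≠ u)
    (hle : dotZ ((-au) • (Pi.single u (1:ℤ) : Fin m → ℤ) + t • (Pi.single v (1:ℤ) : Fin m → ℤ))
        ((-au) • (Pi.single u (1:ℤ) : Fin m → ℤ) + t' • (Pi.single v' (1:ℤ) : Fin m → ℤ)) ≤ 0) :
    Conjugate ((-au) • (Pi.single u (1:ℤ) : Fin m → ℤ) + t • (Pi.single v (1:ℤ) : Fin m → ℤ))
      ((-au) • (Pi.single u (1:ℤ) : Fin m → ℤ) + t' • (Pi.single v' (1:ℤ) : Fin m → ℤ)) := by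
  rw [dotZ_expand] at hle
  have huv' : ¬ u = v' := fun h => hv'u h.symm
  have hvv' : v = v' := by
    by_contra hne
    simp [huv', hvu, hne] at hle
    rcases hau with rfl|rfl <;> omega
  subst hvv'
  simp [huv', hvu] at hle
  have ht'' : t' = -t := by
    rcases hau with rfl|rfl <;> rcases ht with rfl|rfl <;> rcases ht' with rfl|rfl <;> omega
  subst ht''
  constructor
  · rw [LinearIndependent.pair_iff]
    intro s r hsr
    have hu := congrFun hsr u
    have hv := congrFun hsr v
    simp [Pi.single_apply, hvu, huv'] at hu hv
    constructor <;> (rcases hau with rfl|rfl <;> rcases ht with rfl|rfl <;> omega)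
  · exact ⟨u, v, fun h => hvu h.symm, -au, t,
      (by rcases hau with rfl|rfl <;> simp),
      ht, rfl, by simp [neg_smul, sub_eq_add_neg]⟩

lemma type2_form {m : ℕ} {x : Fin m → ℤ} (hx : dotZ x x = 2) :
    ∃ j k : Fin m, j ≠ k ∧ (x j = 1 ∨ x j = -1) ∧ (x k = 1 ∨ x k = -1) ∧
      x = x j • Pi.single j (1:ℤ) + x k • Pi.single k (1:ℤ) := by
  have hb : ∀ i, x i = 1 ∨ x i = 0 ∨ x i = -1 := by
    intro i
    have hle : x i * x i ≤ 2 := by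
      rw [← hx]
      exact Finset.single_le_sum (f := fun i => x i * x i) (fun i _ => mul_self_nonneg _)
        (Finset.mem_univ i)
    have h1 : -1 ≤ x i := by nlinarith
    have h2 : x i ≤ 1 := by nlinarith
    omega
  set s : Finset (Fin m) := Finset.univ.filter (fun i => x i ≠ 0) with hs
  have hcard : (s.card : ℤ) = 2 := by
    rw [← hx]
    unfold dotZ
    have he : ∀ i ∈ Finset.univ, x i * x i = if x i ≠ 0 then (1:ℤ) else 0 := by
      intro i _
      rcases hb i with h|h|h <;> simp [h]
    rw [Finset.sum_congr rfl he, Finset.sum_boole]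
  have hcard2 : s.card = 2 := by exact_mod_cast hcard
  obtain ⟨j, k, hjk, hsjk⟩ := Finset.card_eq_two.mp hcard2
  have hmem : ∀ i, x i ≠ 0 ↔ (i = j ∨ i = k) := by
    intro i
    constructor
    · intro h
      have : i ∈ s := by simp [hs, h]
      rw [hsjk] at this; simpa using this
    · rintro (rfl|rfl) <;> [skip; skip] <;>
      · have : i ∈ s := by rw [hsjk]; simp
        simpa [hs] using this
  have hxj : x j ≠ 0 := (hmem j).mpr (Or.inl rfl)
  have hxk : x k ≠ 0 := (hmem k).mpr (Or.inr rfl)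
  refine ⟨j, k, hjk, ?_, ?_, ?_⟩
  · rcases hb j with h|h|h <;> simp [h] at hxj ⊢
  · rcases hb k with h|h|h <;> simp [h] at hxk ⊢
  · funext i
    by_cases hij : i = j
    · subst hij; simp [Pi.single_apply, hjk]
    by_cases hik : i = k
    · subst hik; simp [Pi.single_apply, hij]
    · have : x i = 0 := by
        by_contra h
        rcases (hmem i).mp h with h'|h' <;> [exact hij h'; exact hik h']
      simp [this, Pi.single_apply, hij, hik]

/-- Lemma 2.2(1): if `β, γ, δ` are type 2 elements pairwise non-positively paired
(simple roots), each pairing to `−1` with the type 2 element `α`, then some pair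
among `{β, γ, δ}` is conjugate. -/
theorem stmt3 {m : ℕ} (α β γ δ : Fin m → ℤ)
    (hα : dotZ α α = 2) (hβ : dotZ β β = 2) (hγ : dotZ γ γ = 2) (hδ : dotZ δ δ = 2)
    (hβγ : dotZ β γ ≤ 0) (hβδ : dotZ β δ ≤ 0) (hγδ : dotZ γ δ ≤ 0)
    (h1 : dotZ β α = -1) (h2 : dotZ γ α = -1) (h3 : dotZ δ α = -1) :
    Conjugate β γ ∨ Conjugate β δ ∨ Conjugate γ δ := by
  obtain ⟨p, q, hpq, hap, haq, hαeq⟩ := type2_form hα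
  obtain ⟨j₁, k₁, hjk₁, hb₁, hc₁, hβeq⟩ := type2_form hβ
  obtain ⟨j₂, k₂, hjk₂, hb₂, hc₂, hγeq⟩ := type2_form hγ
  obtain ⟨j₃, k₃, hjk₃, hb₃, hc₃, hδeq⟩ := type2_form hδ
  rw [hβeq, hαeq] at h1
  rw [hγeq, hαeq] at h2
  rw [hδeq, hαeq] at h3
  obtain ⟨u₁, v₁, t₁, au₁, hu₁, hv₁p, hv₁q, ht₁, hβ'⟩ :=
    overlap hpq hjk₁ hap haq hb₁ hc₁ h1
  obtain ⟨u₂, v₂, t₂, au₂, hu₂, hv₂p, hv₂q, ht₂, hγ'⟩ :=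
    overlap hpq hjk₂ hap haq hb₂ hc₂ h2
  obtain ⟨u₃, v₃, t₃, au₃, hu₃, hv₃p, hv₃q, ht₃, hδ'⟩ :=
    overlap hpq hjk₃ hap haq hb₃ hc₃ h3
  have hβf : β = (-au₁) • (Pi.single u₁ (1:ℤ) : Fin m → ℤ) + t₁ • (Pi.single v₁ (1:ℤ) : Fin m → ℤ) :=
    hβeq.trans hβ'
  have hγf : γ = (-au₂) • (Pi.single u₂ (1:ℤ) : Fin m → ℤ) + t₂ • (Pi.single v₂ (1:ℤ) : Fin m → ℤ) :=
    hγeq.trans hγ'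
  have hδf : δ = (-au₃) • (Pi.single u₃ (1:ℤ) : Fin m → ℤ) + t₃ • (Pi.single v₃ (1:ℤ) : Fin m → ℤ) :=
    hδeq.trans hδ'
  clear hβeq hγeq hδeq hβ' hγ' hδ' h1 h2 h3 hα hβ hγ hδ hαeq
  rcases hu₁ with ⟨rfl, rfl⟩|⟨rfl, rfl⟩ <;>
    rcases hu₂ with ⟨rfl, rfl⟩|⟨rfl, rfl⟩ <;>
      rcases hu₃ with ⟨rfl, rfl⟩|⟨rfl, rfl⟩
  · left; rw [hβf, hγf] at hβγ ⊢; exact pair_conj hap ht₁ ht₂ hv₁p hv₂p hβγ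
  · left; rw [hβf, hγf] at hβγ ⊢; exact pair_conj hap ht₁ ht₂ hv₁p hv₂p hβγ
  · right; left; rw [hβf, hδf] at hβδ ⊢; exact pair_conj hap ht₁ ht₃ hv₁p hv₃p hβδ
  · right; right; rw [hγf, hδf] at hγδ ⊢; exact pair_conj haq ht₂ ht₃ hv₂q hv₃q hγδ
  · right; right; rw [hγf, hδf] at hγδ ⊢; exact pair_conj hap ht₂ ht₃ hv₂p hv₃p hγδ
  · right; left; rw [hβf, hδf] at hβδ ⊢; exact pair_conj haq ht₁ ht₃ hv₁q hv₃q hβδ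
  · left; rw [hβf, hγf] at hβγ ⊢; exact pair_conj haq ht₁ ht₂ hv₁q hv₂q hβγ
  · left; rw [hβf, hγf] at hβγ ⊢; exact pair_conj haq ht₁ ht₂ hv₁q hv₂q hβγ
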